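/- The matrix inverse map X ↦ X⁻¹ is matrix convex on positive definite matrices: for symmetric positive definite X, Y and θ ∈ [0,1], (θX + (1-θ)Y)⁻¹ ⪯ θX⁻¹ + (1-θ)Y⁻¹. -/

import Mathlib

lemma posSemidef_smul_nonneg {n : ℕ} {M : Matrix (Fin n) (Fin n) ℝ}
    (hM : M.PosSemidef) {c : ℝ} (hc : 0 ≤ c) : (c • M).PosSemidef := by
  refine ⟨?_, fun x => ?_⟩
  · unfold Matrix.IsHermitian
    rw [Matrix.conjTranspose_smul, hM.1]
    simp
  · exact (hM.smul hc).2 x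

lemma posDef_smul_pos {n : ℕ} {M : Matrix (Fin n) (Fin n) ℝ}
    (hM : M.PosDef) {c : ℝ} (hc : 0 < c) : (c • M).PosDef := by
  refine ⟨?_, fun x hx => ?_⟩
  · unfold Matrix.IsHermitian
    rw [Matrix.conjTranspose_smul, hM.1]
    simp
  · exact (hM.smul hc).2 hx

/-- Matrix inversion is matrix convex on symmetric positive definite matrices:
`(θX + (1-θ)Y)⁻¹ ⪯ θX⁻¹ + (1-θ)Y⁻¹`. -/
theorem inv_matrix_convex_posDef {n : ℕ} (X Y : Matrix (Fin n) (Fin n) ℝ)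
    (hXs : X.IsSymm) (hYs : Y.IsSymm) (hX : X.PosDef) (hY : Y.PosDef)
    (θ : ℝ) (hθ0 : 0 ≤ θ) (hθ1 : θ ≤ 1) :
    (θ • X⁻¹ + (1 - θ) • Y⁻¹ - (θ • X + (1 - θ) • Y)⁻¹).PosSemidef := by
  have hXu : IsUnit X.det := hX.isUnit.map (Matrix.detMonoidHom)
  have hYu : IsUnit Y.det := hY.isUnit.map (Matrix.detMonoidHom)
  set A : Matrix (Fin n) (Fin n) ℝ := X⁻¹ with hAdef
  set B : Matrix (Fin n) (Fin n) ℝ := Y⁻¹ with hBdef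
  have hAd : A.PosDef := hX.inv
  have hBd : B.PosDef := hY.inv
  set N : Matrix (Fin n) (Fin n) ℝ := θ • B + (1 - θ) • A with hNdef
  -- N is positive definite (convex combination of positive definite matrices)
  have hNd : N.PosDef := by
    rcases eq_or_lt_of_le hθ0 with h0 | h0
    · have : N = A := by rw [hNdef, ← h0]; simp
      rw [this]; exact hAd
    · rcases eq_or_lt_of_le hθ1 with h1 | h1
      · have : N = B := by rw [hNdef, h1]; simp
        rw [this]; exact hBd
      · exact (posDef_smul_pos hBd h0).add (posDef_smul_pos hAd (by linarith))
  have hNu : IsUnit N.det := hNd.isUnit.map (Matrix.detMonoidHom)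
  -- X * N * Y = θ • X + (1-θ) • Y, and likewise Y * N * X
  have h1 : X * N * Y = θ • X + (1 - θ) • Y := by
    rw [hNdef]
    rw [Matrix.mul_add, Matrix.add_mul, Matrix.mul_smul, Matrix.mul_smul,
      Matrix.smul_mul, Matrix.smul_mul, hAdef, hBdef,
      Matrix.mul_assoc X Y⁻¹ Y, Matrix.nonsing_inv_mul Y hYu, Matrix.mul_one,
      Matrix.mul_nonsing_inv X hXu, Matrix.one_mul]
  have h2 : Y * N * X = θ • X + (1 - θ) • Y := by
    rw [hNdef]
    rw [Matrix.mul_add, Matrix.add_mul, Matrix.mul_smul, Matrix.mul_smul,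
      Matrix.smul_mul, Matrix.smul_mul, hAdef, hBdef,
      Matrix.mul_assoc Y X⁻¹ X, Matrix.nonsing_inv_mul X hXu, Matrix.mul_one,
      Matrix.mul_nonsing_inv Y hYu, Matrix.one_mul]
  -- hence the inverse of the convex combination
  have hCinv : (θ • X + (1 - θ) • Y)⁻¹ = B * N⁻¹ * A := by
    rw [← h1, Matrix.mul_inv_rev, Matrix.mul_inv_rev, ← hAdef, ← hBdef, Matrix.mul_assoc]
  have hCinv' : (θ • X + (1 - θ) • Y)⁻¹ = A * N⁻¹ * B := by
    rw [← h2, Matrix.mul_inv_rev, Matrix.mul_inv_rev, ← hAdef, ← hBdef, Matrix.mul_assoc]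
  have hswap : B * N⁻¹ * A = A * N⁻¹ * B := by rw [← hCinv, ← hCinv']
  -- expansions of θ•A and (1-θ)•B
  have eA0 : A * N⁻¹ * (θ • B + (1 - θ) • A) = A := by
    rw [← hNdef, Matrix.nonsing_inv_mul_cancel_right N A hNu]
  have eB0 : (θ • B + (1 - θ) • A) * (N⁻¹ * B) = B := by
    rw [← hNdef, Matrix.mul_nonsing_inv_cancel_left N B hNu]
  have eA : θ • A = (θ * θ) • (A * N⁻¹ * B) + (θ * (1 - θ)) • (A * N⁻¹ * A) := by
    conv_lhs => rw [← eA0]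
    rw [Matrix.mul_add, Matrix.mul_smul, Matrix.mul_smul, smul_add, smul_smul, smul_smul]
  have eB : (1 - θ) • B = (θ * (1 - θ)) • (B * N⁻¹ * B) + ((1 - θ) * (1 - θ)) • (A * N⁻¹ * B) := by
    conv_lhs => rw [← eB0]
    rw [Matrix.add_mul, Matrix.smul_mul, Matrix.smul_mul, smul_add, smul_smul, smul_smul,
      ← Matrix.mul_assoc, ← Matrix.mul_assoc]
    module
  have expand : (A - B) * N⁻¹ * (A - B)
      = A * N⁻¹ * A - A * N⁻¹ * B - A * N⁻¹ * B + B * N⁻¹ * B := by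
    simp only [Matrix.sub_mul, Matrix.mul_sub]
    rw [hswap]
    abel
  have key : θ • A + (1 - θ) • B - (θ • X + (1 - θ) • Y)⁻¹
      = (θ * (1 - θ)) • ((A - B) * N⁻¹ * (A - B)) := by
    rw [hCinv', eA, eB, expand]
    module
  rw [key]
  refine posSemidef_smul_nonneg ?_ (mul_nonneg hθ0 (by linarith))
  have hABs : (A - B).conjTranspose = A - B := by
    rw [Matrix.conjTranspose_sub, hAd.1, hBd.1]
  have h := hNd.inv.posSemidef.mul_mul_conjTranspose_same (A - B)
  rwa [hABs] at h
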